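/- If TWO has a winning strategy in the Menger game on a topological space X, then X is both productively Lindelöf and productively Menger: for every Lindelöf space Y the product X × Y is Lindelöf, and for every Menger space Y the product X × Y is Menger. No separation axioms are assumed. -/

import Mathlib

open Set

/-- `GDom R` is the set of dominating families of the relation `R`:
sets `Z ⊆ B` such that every `a ∈ A` is dominated by some `b ∈ Z`. -/
def GDom {α β : Type*} (R : α → β → Prop) : Set (Set β) :=
  {Z | ∀ a : α, ∃ b ∈ Z, R a b}

/-- A relation is total: every element of the domain is dominated by something. -/
def IsTotalRel {α β : Type*} (R : α → β → Prop) : Prop :=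
  ∀ a : α, ∃ b : β, R a b

/-- The product of two relations. -/
def GProd {α β α' β' : Type*} (R : α → β → Prop) (R' : α' → β' → Prop) :
    α × α' → β × β' → Prop :=
  fun a b => R a.1 b.1 ∧ R' a.2 b.2

/-- The finite history consisting of the first `n` moves of the sequence `b`. -/
def GHist {β : Type*} (b : ℕ → β) (n : ℕ) : List β :=
  List.ofFn fun i : Fin n => b i

/-- ONE has a winning strategy in the game `G(P,Q)`: in inning `n` ONE plays `aₙ ∈ A`,
TWO answers `bₙ` with `R aₙ bₙ`; ONE wins iff `{bₙ : n} ∈ GDom T`. -/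
def OneWinsG {α β γ : Type*} (R : α → β → Prop) (T : γ → β → Prop) : Prop :=
  ∃ σ : List β → α, ∀ b : ℕ → β,
    (∀ n, R (σ (GHist b n)) (b n)) → Set.range b ∈ GDom T

/-- TWO has a winning strategy in the game `G(P,Q)`. -/
def TwoWinsG {α β γ : Type*} (R : α → β → Prop) (T : γ → β → Prop) : Prop :=
  ∃ τ : List α → β, ∀ a : ℕ → α,
    (∀ n, R (a n) (τ (GHist a (n + 1)))) ∧
    Set.range (fun n => τ (GHist a (n + 1))) ∉ GDom T

/-- ONE has a winning strategy in the game `G₁(𝒜,ℬ)`: in inning `n` ONE plays `Aₙ ∈ 𝒜`,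
TWO answers `bₙ ∈ Aₙ`; TWO wins iff `{bₙ : n} ∈ ℬ`. -/
def OneWinsG1 {β : Type*} (𝒜 ℬ : Set (Set β)) : Prop :=
  ∃ σ : List β → Set β, (∀ h, σ h ∈ 𝒜) ∧
    ∀ b : ℕ → β, (∀ n, b n ∈ σ (GHist b n)) → Set.range b ∉ ℬ

/-- TWO has a winning strategy in the game `G₁(𝒜,ℬ)`. -/
def TwoWinsG1 {β : Type*} (𝒜 ℬ : Set (Set β)) : Prop :=
  ∃ τ : List (Set β) → β, ∀ S : ℕ → Set β, (∀ n, S n ∈ 𝒜) →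
    (∀ n, τ (GHist S (n + 1)) ∈ S n) ∧
    Set.range (fun n => τ (GHist S (n + 1))) ∈ ℬ

/-- TWO has a winning strategy in the game `G_fin(𝒜,ℬ)`: in inning `n` ONE plays `Aₙ ∈ 𝒜`,
TWO answers a finite `Fₙ ⊆ Aₙ`; TWO wins iff `⋃ₙ Fₙ ∈ ℬ`. -/
def TwoWinsGfin {β : Type*} (𝒜 ℬ : Set (Set β)) : Prop :=
  ∃ τ : List (Set β) → Set β, ∀ S : ℕ → Set β, (∀ n, S n ∈ 𝒜) →
    (∀ n, τ (GHist S (n + 1)) ⊆ S n ∧ (τ (GHist S (n + 1))).Finite) ∧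
    (⋃ n, τ (GHist S (n + 1))) ∈ ℬ

/-- `(𝒜,ℬ)`-Lindelöf: every member of `𝒜` has a countable subset belonging to `ℬ`. -/
def LindelofFam {β : Type*} (𝒜 ℬ : Set (Set β)) : Prop :=
  ∀ S ∈ 𝒜, ∃ C ⊆ S, C.Countable ∧ C ∈ ℬ

/-- The selection principle `S₁(𝒜,ℬ)`. -/
def SelS1 {β : Type*} (𝒜 ℬ : Set (Set β)) : Prop :=
  ∀ A : ℕ → Set β, (∀ n, A n ∈ 𝒜) →
    ∃ b : ℕ → β, (∀ n, b n ∈ A n) ∧ Set.range b ∈ ℬ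

/-- The selection principle `S_fin(𝒜,ℬ)`. -/
def SelSfin {β : Type*} (𝒜 ℬ : Set (Set β)) : Prop :=
  ∀ A : ℕ → Set β, (∀ n, A n ∈ 𝒜) →
    ∃ F : ℕ → Set β, (∀ n, F n ⊆ A n ∧ (F n).Finite) ∧ (⋃ n, F n) ∈ ℬ

/-- `𝒪_X`: the family of open covers of `X`. -/
def OpenCovers (X : Type*) [TopologicalSpace X] : Set (Set (Set X)) :=
  {𝒰 | (∀ U ∈ 𝒰, IsOpen U) ∧ ⋃₀ 𝒰 = Set.univ}

/-- ONE has a winning strategy in the point-open game on `X`. -/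
def OneWinsPointOpen (X : Type*) [TopologicalSpace X] : Prop :=
  ∃ σ : List (Set X) → X, ∀ U : ℕ → Set X,
    (∀ n, IsOpen (U n) ∧ σ (GHist U n) ∈ U n) → Set.range U ∈ OpenCovers X

/-- TWO has a winning strategy in the point-open game on `X`. -/
def TwoWinsPointOpen (X : Type*) [TopologicalSpace X] : Prop :=
  ∃ τ : List X → Set X, ∀ x : ℕ → X,
    (∀ n, IsOpen (τ (GHist x (n + 1))) ∧ x n ∈ τ (GHist x (n + 1))) ∧
    Set.range (fun n => τ (GHist x (n + 1))) ∉ OpenCovers X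

/-- `𝔇_X`: the family of dense subsets of `X`. -/
def DenseSets (X : Type*) [TopologicalSpace X] : Set (Set X) :=
  {D | Dense D}

/-- ONE has a winning strategy in the point-picking game `G^D_ω(X)` of Berner and Juhász. -/
def OneWinsPointPicking (X : Type*) [TopologicalSpace X] : Prop :=
  ∃ σ : List X → Set X, (∀ h, IsOpen (σ h) ∧ (σ h).Nonempty) ∧
    ∀ x : ℕ → X, (∀ n, x n ∈ σ (GHist x n)) → Dense (Set.range x)

/-- TWO has a winning strategy in the point-picking game `G^D_ω(X)`. -/
def TwoWinsPointPicking (X : Type*) [TopologicalSpace X] : Prop :=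
  ∃ τ : List (Set X) → X, ∀ U : ℕ → Set X,
    (∀ n, IsOpen (U n) ∧ (U n).Nonempty) →
    (∀ n, τ (GHist U (n + 1)) ∈ U n) ∧
    ¬ Dense (Set.range fun n => τ (GHist U (n + 1)))

/-- `𝒟_X`: families of open sets whose union is dense in `X`. -/
def DenseUnionFams (X : Type*) [TopologicalSpace X] : Set (Set (Set X)) :=
  {𝒰 | (∀ U ∈ 𝒰, IsOpen U) ∧ Dense (⋃₀ 𝒰)}

/-- ONE has a winning strategy in Tkachuk's game `θ(X)`. -/
def OneWinsTheta (X : Type*) [TopologicalSpace X] : Prop :=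
  ∃ σ : List (Set X) → X, ∀ U : ℕ → Set X,
    (∀ n, IsOpen (U n) ∧ σ (GHist U n) ∈ U n) → Dense (⋃ n, U n)

/-- TWO has a winning strategy in Tkachuk's game `θ(X)`. -/
def TwoWinsTheta (X : Type*) [TopologicalSpace X] : Prop :=
  ∃ τ : List X → Set X, ∀ x : ℕ → X,
    (∀ n, IsOpen (τ (GHist x (n + 1))) ∧ x n ∈ τ (GHist x (n + 1))) ∧
    ¬ Dense (⋃ n, τ (GHist x (n + 1)))

/-- `Ω_x`: the family of subsets of `X` having `x` in their closure. -/
def OmegaPt {X : Type*} [TopologicalSpace X] (x : X) : Set (Set X) :=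
  {A | x ∈ closure A}

/-- ONE has a winning strategy in Gruenhage's game `G^c_{O,P}(X,x)`. -/
def OneWinsGruenhage {X : Type*} [TopologicalSpace X] (x : X) : Prop :=
  ∃ σ : List X → Set X, (∀ h, IsOpen (σ h) ∧ x ∈ σ h) ∧
    ∀ y : ℕ → X, (∀ n, y n ∈ σ (GHist y n)) → x ∈ closure (Set.range y)

/-- TWO has a winning strategy in Gruenhage's game `G^c_{O,P}(X,x)`. -/
def TwoWinsGruenhage {X : Type*} [TopologicalSpace X] (x : X) : Prop :=
  ∃ τ : List (Set X) → X, ∀ V : ℕ → Set X,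
    (∀ n, IsOpen (V n) ∧ x ∈ V n) →
    (∀ n, τ (GHist V (n + 1)) ∈ V n) ∧
    x ∉ closure (Set.range fun n => τ (GHist V (n + 1)))

/-- ONE has a winning strategy in the compact-open game on `X`. -/
def OneWinsCompactOpen (X : Type*) [TopologicalSpace X] : Prop :=
  ∃ σ : List (Set X) → Set X, (∀ h, IsCompact (σ h)) ∧
    ∀ U : ℕ → Set X, (∀ n, IsOpen (U n) ∧ σ (GHist U n) ⊆ U n) →
      (⋃ n, U n) = Set.univ

/-- `⪯` is downwards `P`-compatible. -/
def DownwardsCompat {α β : Type*} (R : α → β → Prop) (le : β → β → Prop) : Prop :=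
  ∀ a b₁ b₂, R a b₁ → R a b₂ → ∃ b, R a b ∧ le b b₁ ∧ le b b₂

/-- `⪯` is upwards `Q`-compatible. -/
def UpwardsCompat {γ β : Type*} (T : γ → β → Prop) (le : β → β → Prop) : Prop :=
  ∀ c b₁ b₂, T c b₁ → le b₁ b₂ → T c b₂

/-- `⪯` is countably downwards `P`-compatible. -/
def CountablyDownwardsCompat {α β : Type*} (R : α → β → Prop) (le : β → β → Prop) : Prop :=
  ∀ a, ∀ E : Set β, E.Countable → E.Nonempty → (∀ b ∈ E, R a b) →
    ∃ b', R a b' ∧ ∀ b ∈ E, le b' b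

/-- A relation is `ℵ₀`-preserving if some partial order on `B` is both upwards
compatible and countably downwards compatible with it. -/
def Aleph0Preserving {α β : Type*} (R : α → β → Prop) : Prop :=
  ∃ le : β → β → Prop, IsPartialOrder β le ∧
    UpwardsCompat R le ∧ CountablyDownwardsCompat R le

/-- `Dom_γ(T)`: the γ-dominating sequences of the relation `T`. -/
def GDomGamma {γ β : Type*} (T : γ → β → Prop) : Set (ℕ → β) :=
  {z | ∀ c : γ, {n : ℕ | ¬ T c (z n)}.Finite}

/-- ONE has a winning strategy in the game `G_γ(P,Q)`. -/
def OneWinsGgamma {α β γ : Type*} (R : α → β → Prop) (T : γ → β → Prop) : Prop :=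
  ∃ σ : List β → α, ∀ b : ℕ → β,
    (∀ n, R (σ (GHist b n)) (b n)) → b ∈ GDomGamma T

/-- TWO has a winning strategy in the game `G_γ(P,Q)`. -/
def TwoWinsGgamma {α β γ : Type*} (R : α → β → Prop) (T : γ → β → Prop) : Prop :=
  ∃ τ : List α → β, ∀ a : ℕ → α,
    (∀ n, R (a n) (τ (GHist a (n + 1)))) ∧
    (fun n => τ (GHist a (n + 1))) ∉ GDomGamma T

/-- ONE has a winning strategy in the game `G₁(𝒜, Dom_γ(T))`. -/
def OneWinsG1gamma {β γ : Type*} (𝒜 : Set (Set β)) (T : γ → β → Prop) : Prop :=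
  ∃ σ : List β → Set β, (∀ h, σ h ∈ 𝒜) ∧
    ∀ b : ℕ → β, (∀ n, b n ∈ σ (GHist b n)) → b ∉ GDomGamma T

/-- TWO has a winning strategy in the game `G₁(𝒜, Dom_γ(T))`. -/
def TwoWinsG1gamma {β γ : Type*} (𝒜 : Set (Set β)) (T : γ → β → Prop) : Prop :=
  ∃ τ : List (Set β) → β, ∀ S : ℕ → Set β, (∀ n, S n ∈ 𝒜) →
    (∀ n, τ (GHist S (n + 1)) ∈ S n) ∧
    (fun n => τ (GHist S (n + 1))) ∈ GDomGamma T

/-- The `ℵ₀`-modification of a relation: moves become nonempty countable subsets of `B`,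
dominated pointwise. -/
def CountMod {α β : Type*} (R : α → β → Prop) :
    α → {E : Set β // E.Countable ∧ E.Nonempty} → Prop :=
  fun a E => ∀ b ∈ E.1, R a b
namespace S15
open scoped Classical

variable {X Y : Type*} [TopologicalSpace X] [TopologicalSpace Y]

/-- The cover of `X` "aimed at" a set `B ⊆ Y` using the cover `W k` of `X × Y`:
open sets `U` admitting an open `V ⊇ B` with `U ×ˢ V` inside a finite union from `W k`. -/
def aimed (W : ℕ → Set (Set (X × Y))) (B : Set Y) (k : ℕ) : Set (Set X) :=
  {U | IsOpen U ∧ ∃ V : Set Y, IsOpen V ∧ B ⊆ V ∧ ∃ G : Set (Set (X × Y)),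
      G ⊆ W k ∧ G.Finite ∧ U ×ˢ V ⊆ ⋃₀ G}

theorem aimed_mem_openCovers {W : ℕ → Set (Set (X × Y))}
    (hW : ∀ k, W k ∈ OpenCovers (X × Y)) {B : Set Y} (hB : B.Finite) (k : ℕ) :
    aimed W B k ∈ OpenCovers X := by
  constructor
  · intro U hU; exact hU.1
  · apply Set.eq_univ_of_forall
    intro x
    -- for each b ∈ B pick a rectangle
    have hrect : ∀ b ∈ B, ∃ u : Set X, ∃ v : Set Y, ∃ Wb ∈ W k,
        IsOpen u ∧ IsOpen v ∧ x ∈ u ∧ b ∈ v ∧ u ×ˢ v ⊆ Wb := by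
      intro b _
      have hxb : (x, b) ∈ ⋃₀ W k := by rw [(hW k).2]; trivial
      obtain ⟨Wb, hWb, hxbW⟩ := hxb
      obtain ⟨u, v, hu, hv, hxu, hbv, huv⟩ :=
        isOpen_prod_iff.mp ((hW k).1 Wb hWb) x b hxbW
      exact ⟨u, v, Wb, hWb, hu, hv, hxu, hbv, huv⟩
    choose! u v Wb hWbW hu hv hxu hbv huv using hrect
    refine Set.mem_sUnion.mpr ⟨⋂ b ∈ B, u b, ?_, ?_⟩
    · refine ⟨hB.isOpen_biInter (fun b hb => hu b hb), ⋃ b ∈ B, v b, ?_, ?_, ?_⟩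
      · exact isOpen_biUnion (fun b hb => hv b hb)
      · intro b hb; exact Set.mem_biUnion hb (hbv b hb)
      · refine ⟨(fun b => Wb b) '' B, ?_, hB.image _, ?_⟩
        · rintro _ ⟨b, hb, rfl⟩; exact hWbW b hb
        · rintro ⟨x', y'⟩ ⟨hx', hy'⟩
          simp only [Set.mem_iUnion] at hy'
          obtain ⟨b, hb, hy'v⟩ := hy'
          refine Set.mem_sUnion.mpr ⟨Wb b, ⟨b, hb, rfl⟩, ?_⟩
          exact huv b hb ⟨Set.mem_iInter₂.mp hx' b hb, hy'v⟩
    · exact Set.mem_iInter₂.mpr (fun b hb => hxu b hb)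

/-- chosen open `V ⊇ B` witnessing `U ∈ aimed W B k` (junk `∅` otherwise). -/
noncomputable def witV (W : ℕ → Set (Set (X × Y))) (B : Set Y) (k : ℕ) (U : Set X) : Set Y :=
  if h : U ∈ aimed W B k then h.2.choose else ∅

/-- chosen finite `G ⊆ W k` witnessing `U ∈ aimed W B k` (junk `∅` otherwise). -/
noncomputable def witG (W : ℕ → Set (Set (X × Y))) (B : Set Y) (k : ℕ) (U : Set X) :
    Set (Set (X × Y)) :=
  if h : U ∈ aimed W B k then h.2.choose_spec.2.2.choose else ∅

theorem witV_isOpen (W : ℕ → Set (Set (X × Y))) (B : Set Y) (k : ℕ) (U : Set X) :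
    IsOpen (witV W B k U) := by
  unfold witV; split
  · next h => exact h.2.choose_spec.1
  · exact isOpen_empty

theorem witG_finite (W : ℕ → Set (Set (X × Y))) (B : Set Y) (k : ℕ) (U : Set X) :
    (witG W B k U).Finite := by
  unfold witG; split
  · next h => exact h.2.choose_spec.2.2.choose_spec.2.1
  · exact Set.finite_empty

theorem wit_spec {W : ℕ → Set (Set (X × Y))} {B : Set Y} {k : ℕ} {U : Set X}
    (h : U ∈ aimed W B k) :
    B ⊆ witV W B k U ∧ witG W B k U ⊆ W k ∧
      U ×ˢ witV W B k U ⊆ ⋃₀ witG W B k U := by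
  unfold witV witG
  rw [dif_pos h, dif_pos h]
  exact ⟨h.2.choose_spec.2.1, h.2.choose_spec.2.2.choose_spec.1,
    h.2.choose_spec.2.2.choose_spec.2.2⟩

end S15
namespace S15
set_option linter.unusedSectionVars false

variable {X Y : Type*} [TopologicalSpace X] [TopologicalSpace Y]

/-- A node of the probe tree: a list of (aim point, probe depth), latest step first. -/
abbrev Node (Y : Type*) := List (Y × ℕ)

/-- The set of points aimed at along a node. -/
def aims (p : Node Y) : Set Y := {b | b ∈ p.map Prod.fst}

theorem aims_finite (p : Node Y) : (aims p).Finite := (p.map Prod.fst).finite_toSet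

/-- total length of the play-history of a node. -/
def Lp : Node Y → ℕ
  | [] => 0
  | (_, i) :: p => Lp p + i

/-- the cover of `X` played at local inning `j` of the `(y,i)`-probe from node `p`. -/
def pc (W : ℕ → Set (Set (X × Y))) (p : Node Y) (y : Y) (i j : ℕ) : Set (Set X) :=
  aimed W (insert y (aims p))
    (Encodable.encode ((p.map Prod.snd, i, j) : List ℕ × ℕ × ℕ))

theorem pc_mem_openCovers {W : ℕ → Set (Set (X × Y))}
    (hW : ∀ k, W k ∈ OpenCovers (X × Y)) (p : Node Y) (y : Y) (i j : ℕ) :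
    pc W p y i j ∈ OpenCovers X :=
  aimed_mem_openCovers hW ((aims_finite p).insert y) _

/-- the history (list of ONE's moves) leading to a node. -/
def hist (W : ℕ → Set (Set (X × Y))) : Node Y → List (Set (Set X))
  | [] => []
  | (y, i) :: p => hist W p ++ List.ofFn (fun j : Fin i => pc W p y i j)

theorem hist_length (W : ℕ → Set (Set (X × Y))) :
    ∀ p : Node Y, (hist W p).length = Lp p
  | [] => rfl
  | (y, i) :: p => by
      simp [hist, Lp, hist_length W p]

theorem hist_mem_openCovers {W : ℕ → Set (Set (X × Y))}
    (hW : ∀ k, W k ∈ OpenCovers (X × Y)) :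
    ∀ p : Node Y, ∀ q ∈ hist W p, q ∈ OpenCovers X
  | [] => by intro q hq; simp [hist] at hq
  | (y, i) :: p => by
      intro q hq
      rcases List.mem_append.mp hq with h | h
      · exact hist_mem_openCovers hW p q h
      · obtain ⟨j, hj⟩ := List.mem_ofFn.mp h
        exact hj ▸ pc_mem_openCovers hW p y i j

/-- the full infinite play probing node `p` with aim `y` (depth parameter `i`). -/
noncomputable def play (W : ℕ → Set (Set (X × Y))) (p : Node Y) (y : Y) (i : ℕ) :
    ℕ → Set (Set X) :=
  fun n => (hist W p).getD n (pc W p y i (n - Lp p))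

theorem play_ge {W : ℕ → Set (Set (X × Y))} {p : Node Y} {y : Y} {i n : ℕ}
    (h : Lp p ≤ n) : play W p y i n = pc W p y i (n - Lp p) := by
  unfold play
  exact List.getD_eq_default _ _ (by rw [hist_length]; exact h)

theorem play_lt {W : ℕ → Set (Set (X × Y))} {p : Node Y} {y : Y} {i n : ℕ}
    (h : n < Lp p) : play W p y i n = (hist W p).getD n ∅ := by
  unfold play
  have h' : n < (hist W p).length := by rw [hist_length]; exact h
  rw [List.getD_eq_getElem _ _ h', List.getD_eq_getElem _ _ h']

theorem play_mem_openCovers {W : ℕ → Set (Set (X × Y))}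
    (hW : ∀ k, W k ∈ OpenCovers (X × Y)) (p : Node Y) (y : Y) (i : ℕ) (n : ℕ) :
    play W p y i n ∈ OpenCovers X := by
  rcases lt_or_ge n (Lp p) with h | h
  · rw [play_lt h]
    have h' : n < (hist W p).length := by rw [hist_length]; exact h
    rw [List.getD_eq_getElem _ _ h']
    exact hist_mem_openCovers hW p _ (List.getElem_mem h')
  · rw [play_ge h]; exact pc_mem_openCovers hW p y i _

/-- property of being a winning strategy for TWO in the Menger game on `X`. -/
def WinStrat (τ : List (Set (Set X)) → Set (Set X)) : Prop :=
  ∀ S : ℕ → Set (Set X), (∀ n, S n ∈ OpenCovers X) →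
    (∀ n, τ (GHist S (n + 1)) ⊆ S n ∧ (τ (GHist S (n + 1))).Finite) ∧
    (⋃ n, τ (GHist S (n + 1))) ∈ OpenCovers X

/-- TWO's response at local inning `j` of the `(y,i)`-probe from `p`. -/
noncomputable def resp (τ : List (Set (Set X)) → Set (Set X))
    (W : ℕ → Set (Set (X × Y))) (p : Node Y) (y : Y) (i j : ℕ) : Set (Set X) :=
  τ (GHist (play W p y i) (Lp p + j + 1))

theorem resp_sub {τ : List (Set (Set X)) → Set (Set X)} (hτ : WinStrat τ)
    {W : ℕ → Set (Set (X × Y))} (hW : ∀ k, W k ∈ OpenCovers (X × Y))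
    (p : Node Y) (y : Y) (i j : ℕ) :
    resp τ W p y i j ⊆ pc W p y i j := by
  have := (hτ (play W p y i) (play_mem_openCovers hW p y i)).1 (Lp p + j)
  rw [play_ge (Nat.le_add_right _ _), Nat.add_sub_cancel_left] at this
  exact this.1

theorem resp_finite {τ : List (Set (Set X)) → Set (Set X)} (hτ : WinStrat τ)
    {W : ℕ → Set (Set (X × Y))} (hW : ∀ k, W k ∈ OpenCovers (X × Y))
    (p : Node Y) (y : Y) (i j : ℕ) :
    (resp τ W p y i j).Finite :=
  ((hτ (play W p y i) (play_mem_openCovers hW p y i)).1 (Lp p + j)).2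

/-- the open neighbourhood of the aim set produced by TWO's response at inning `j`. -/
noncomputable def Vre (τ : List (Set (Set X)) → Set (Set X))
    (W : ℕ → Set (Set (X × Y))) (p : Node Y) (y : Y) (i j : ℕ) : Set Y :=
  ⋂ U ∈ resp τ W p y i j,
    witV W (insert y (aims p))
      (Encodable.encode ((p.map Prod.snd, i, j) : List ℕ × ℕ × ℕ)) U

/-- survival set: points of `Y` below all rectangles of the first `i` innings of the probe. -/
noncomputable def Nset (τ : List (Set (Set X)) → Set (Set X))
    (W : ℕ → Set (Set (X × Y))) (p : Node Y) (i : ℕ) (y : Y) : Set Y :=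
  ⋂ j ∈ Finset.range i, Vre τ W p y i j

theorem Nset_isOpen {τ : List (Set (Set X)) → Set (Set X)} (hτ : WinStrat τ)
    {W : ℕ → Set (Set (X × Y))} (hW : ∀ k, W k ∈ OpenCovers (X × Y))
    (p : Node Y) (i : ℕ) (y : Y) : IsOpen (Nset τ W p i y) := by
  refine isOpen_biInter_finset (fun j _ => ?_)
  exact (resp_finite hτ hW p y i j).isOpen_biInter (fun U _ => witV_isOpen _ _ _ _)

theorem mem_Nset_self {τ : List (Set (Set X)) → Set (Set X)} (hτ : WinStrat τ)
    {W : ℕ → Set (Set (X × Y))} (hW : ∀ k, W k ∈ OpenCovers (X × Y))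
    (p : Node Y) (i : ℕ) (y : Y) : y ∈ Nset τ W p i y := by
  refine Set.mem_iInter₂.mpr (fun j _ => Set.mem_iInter₂.mpr (fun U hU => ?_))
  have hUa : U ∈ aimed W (insert y (aims p))
      (Encodable.encode ((p.map Prod.snd, i, j) : List ℕ × ℕ × ℕ)) :=
    resp_sub hτ hW p y i j hU
  exact (wit_spec hUa).1 (Set.mem_insert _ _)

/-- the `i`-th survival cover of `Y` at node `p`. -/
noncomputable def Fam (τ : List (Set (Set X)) → Set (Set X))
    (W : ℕ → Set (Set (X × Y))) (p : Node Y) (i : ℕ) : Set (Set Y) :=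
  {V | ∃ y, V = Nset τ W p i y}

theorem Fam_mem_openCovers {τ : List (Set (Set X)) → Set (Set X)} (hτ : WinStrat τ)
    {W : ℕ → Set (Set (X × Y))} (hW : ∀ k, W k ∈ OpenCovers (X × Y))
    (p : Node Y) (i : ℕ) : Fam τ W p i ∈ OpenCovers Y := by
  constructor
  · rintro V ⟨y, rfl⟩; exact Nset_isOpen hτ hW p i y
  · apply Set.eq_univ_of_forall
    intro y
    exact Set.mem_sUnion.mpr ⟨Nset τ W p i y, ⟨y, rfl⟩, mem_Nset_self hτ hW p i y⟩

end S15
namespace S15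
set_option linter.unusedSectionVars false

variable {X Y : Type*} [TopologicalSpace X] [TopologicalSpace Y]

/-- validity of a node relative to a selector `Bsel`. -/
def valid (Bsel : Node Y → ℕ → Set Y) : Node Y → Prop
  | [] => True
  | (y, i) :: p => valid Bsel p ∧ y ∈ Bsel p i

/-- the final selection from `W k`. -/
def FF (τ : List (Set (Set X)) → Set (Set X)) (W : ℕ → Set (Set (X × Y)))
    (Bsel : Node Y → ℕ → Set Y) (k : ℕ) : Set (Set (X × Y)) :=
  {Wp | ∃ p : Node Y, ∃ y : Y, ∃ i j : ℕ, ∃ U : Set X,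
    valid Bsel p ∧ y ∈ Bsel p i ∧ U ∈ resp τ W p y i j ∧
    Encodable.encode ((p.map Prod.snd, i, j) : List ℕ × ℕ × ℕ) = k ∧
    Wp ∈ witG W (insert y (aims p))
      (Encodable.encode ((p.map Prod.snd, i, j) : List ℕ × ℕ × ℕ)) U}

theorem FF_sub {τ : List (Set (Set X)) → Set (Set X)} (hτ : WinStrat τ)
    {W : ℕ → Set (Set (X × Y))} (hW : ∀ k, W k ∈ OpenCovers (X × Y))
    (Bsel : Node Y → ℕ → Set Y) (k : ℕ) : FF τ W Bsel k ⊆ W k := by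
  rintro Wp ⟨p, y, i, j, U, -, -, hU, hk, hWp⟩
  have hUa : U ∈ aimed W (insert y (aims p))
      (Encodable.encode ((p.map Prod.snd, i, j) : List ℕ × ℕ × ℕ)) :=
    resp_sub hτ hW p y i j hU
  have := (wit_spec hUa).2.1 hWp
  rwa [hk] at this

theorem FF_covers {τ : List (Set (Set X)) → Set (Set X)} (hτ : WinStrat τ)
    {W : ℕ → Set (Set (X × Y))} (hW : ∀ k, W k ∈ OpenCovers (X × Y))
    {Bsel : Node Y → ℕ → Set Y}
    (Hcov : ∀ p : Node Y, ∀ y' : Y, ∃ i y, 0 < i ∧ y ∈ Bsel p i ∧ y' ∈ Nset τ W p i y) :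
    ⋃₀ (⋃ k, FF τ W Bsel k) = Set.univ := by
  apply Set.eq_univ_of_forall
  rintro ⟨x, y'⟩
  choose I yE hpos hB hN using fun p => Hcov p y'
  -- the branch followed by `y'`
  obtain ⟨F, hF0, hFs⟩ : ∃ F : ℕ → Node Y,
      F 0 = [] ∧ ∀ m, F (m + 1) = (yE (F m), I (F m)) :: F m :=
    ⟨fun m => Nat.rec [] (fun _ p => (yE p, I p) :: p) m, rfl, fun _ => rfl⟩
  have hvalid : ∀ m, valid Bsel (F m) := by
    intro m; induction m with
    | zero => rw [hF0]; trivial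
    | succ m ih => rw [hFs]; exact ⟨ih, hB _⟩
  have hLps : ∀ m, Lp (F (m + 1)) = Lp (F m) + I (F m) := by
    intro m; rw [hFs]; rfl
  have hLmono : ∀ m, Lp (F m) + 1 ≤ Lp (F (m + 1)) := by
    intro m; rw [hLps]; exact Nat.add_le_add_left (hpos _) _
  have hmle : ∀ m, m ≤ Lp (F m) := by
    intro m; induction m with
    | zero => exact Nat.zero_le _
    | succ m ih => exact le_trans (Nat.add_le_add_right ih 1) (hLmono m)
  have hpre : ∀ m M, m ≤ M → hist W (F m) <+: hist W (F M) := by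
    intro m M h
    induction M with
    | zero => rw [Nat.le_zero.mp h]
    | succ M ih =>
      rcases Nat.lt_or_ge m (M + 1) with h' | h'
      · refine (ih (Nat.lt_succ_iff.mp h')).trans ?_
        rw [hFs]; exact List.prefix_append _ _
      · rw [Nat.le_antisymm h h']
  -- the limit play
  set Pstar : ℕ → Set (Set X) := fun n => (hist W (F (n + 1))).getD n ∅ with hPstar
  have hgetD : ∀ m M n, n < Lp (F m) → n < Lp (F M) →
      ∀ d d' : Set (Set X), (hist W (F m)).getD n d = (hist W (F M)).getD n d' := by
    intro m M n h1 h2 d d'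
    have key : ∀ a b, a ≤ b → n < Lp (F a) →
        ∀ d d' : Set (Set X), (hist W (F a)).getD n d = (hist W (F b)).getD n d' := by
      intro a b hab ha d d'
      have hpref := hpre a b hab
      have hla : n < (hist W (F a)).length := by rw [hist_length]; exact ha
      have hlb : n < (hist W (F b)).length :=
        lt_of_lt_of_le hla hpref.length_le
      rw [List.getD_eq_getElem _ _ hla, List.getD_eq_getElem _ _ hlb]
      exact hpref.getElem hla
    rcases le_total m M with h | h
    · exact key m M h h1 d d'
    · exact (key M m h h2 d' d).symm
  have hPmem : ∀ n, Pstar n ∈ OpenCovers X := by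
    intro n
    have hn : n < Lp (F (n + 1)) := lt_of_lt_of_le (Nat.lt_succ_self n) (hmle (n + 1))
    have hl : n < (hist W (F (n + 1))).length := by rw [hist_length]; exact hn
    rw [hPstar]
    simp only
    rw [List.getD_eq_getElem _ _ hl]
    exact hist_mem_openCovers hW _ _ (List.getElem_mem hl)
  -- TWO wins the limit play, so its responses cover X
  have hwin := (hτ Pstar hPmem).2
  have hx : x ∈ ⋃₀ ⋃ n, τ (GHist Pstar (n + 1)) := by rw [hwin.2]; trivial
  obtain ⟨U, hUmem, hxU⟩ := hx
  obtain ⟨n, hUn⟩ := Set.mem_iUnion.mp hUmem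
  -- locate the inning
  have hloc : ∀ n : ℕ, ∃ m, Lp (F m) ≤ n ∧ n < Lp (F (m + 1)) := by
    intro n; induction n with
    | zero =>
      refine ⟨0, ?_, ?_⟩
      · rw [hF0]; exact le_rfl
      · exact lt_of_lt_of_le Nat.zero_lt_one (hmle 1)
    | succ n ih =>
      obtain ⟨m, h1, h2⟩ := ih
      rcases Nat.lt_or_ge (n + 1) (Lp (F (m + 1))) with h | h
      · exact ⟨m, le_trans h1 (Nat.le_succ n), h⟩
      · refine ⟨m + 1, h, ?_⟩
        calc n + 1 + 1 ≤ Lp (F (m + 1)) + 1 := Nat.add_le_add_right h2 1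
        _ ≤ Lp (F (m + 2)) := hLmono (m + 1)
  obtain ⟨m, hm1, hm2⟩ := hloc n
  set p := F m
  set y := yE (F m)
  set i := I (F m)
  set j := n - Lp (F m) with hj
  have hnj : Lp (F m) + j = n := Nat.add_sub_cancel' hm1
  have hji : j < i := by
    have : n < Lp (F m) + i := by rw [← hLps]; exact hm2
    omega
  -- the limit play agrees with the probe play up to inning n
  have hagree : GHist Pstar (n + 1) = GHist (play W p y i) (n + 1) := by
    unfold GHist
    refine congrArg List.ofFn (funext fun k : Fin (n + 1) => ?_)
    rcases Nat.lt_or_ge (k : ℕ) (Lp (F m)) with hk | hk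
    · rw [play_lt hk]
      exact hgetD (k + 1) m k
        (lt_of_lt_of_le (Nat.lt_succ_self _) (hmle _)) hk _ _
    · rw [play_ge hk]
      have hkn : (k : ℕ) < Lp (F (m + 1)) := lt_of_le_of_lt (Nat.lt_succ_iff.mp k.2) hm2
      have e1 : Pstar (k : ℕ) = (hist W (F (m + 1))).getD (k : ℕ) ∅ :=
        hgetD (k + 1) (m + 1) k
          (lt_of_lt_of_le (Nat.lt_succ_self _) (hmle _)) hkn _ _
      have hlen1 : (hist W (F m)).length = Lp (F m) := hist_length W _
      have hform : hist W (F (m + 1)) = hist W (F m) ++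
          List.ofFn (fun j' : Fin i => pc W p y i j') := by
        rw [hFs]; rfl
      rw [e1, hform, List.getD_append_right _ _ _ _ (by omega : (hist W (F m)).length ≤ (k : ℕ))]
      have hofl : (k : ℕ) - (hist W (F m)).length < (List.ofFn (fun j' : Fin i => pc W p y i j')).length := by
        rw [List.length_ofFn]
        have : (k : ℕ) < Lp (F m) + i := by rw [← hLps]; exact hkn
        omega
      rw [List.getD_eq_getElem _ _ hofl]
      simp only [List.getElem_ofFn]
      rw [hlen1]
  have hresp : τ (GHist Pstar (n + 1)) = resp τ W p y i j := by
    rw [hagree]; unfold resp; rw [hnj]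
  rw [hresp] at hUn
  -- the witness rectangle catches (x, y')
  have hUa : U ∈ aimed W (insert y (aims p))
      (Encodable.encode ((p.map Prod.snd, i, j) : List ℕ × ℕ × ℕ)) :=
    resp_sub hτ hW p y i j hUn
  have hy'V : y' ∈ witV W (insert y (aims p))
      (Encodable.encode ((p.map Prod.snd, i, j) : List ℕ × ℕ × ℕ)) U := by
    have h1 : y' ∈ Nset τ W p i y := hN (F m)
    have h2 : y' ∈ Vre τ W p y i j :=
      Set.mem_iInter₂.mp h1 j (Finset.mem_range.mpr hji)
    exact Set.mem_iInter₂.mp h2 U hUn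
  have hrect : (x, y') ∈ ⋃₀ witG W (insert y (aims p))
      (Encodable.encode ((p.map Prod.snd, i, j) : List ℕ × ℕ × ℕ)) U :=
    (wit_spec hUa).2.2 ⟨hxU, hy'V⟩
  obtain ⟨W₀, hW₀G, hzW₀⟩ := hrect
  refine Set.mem_sUnion.mpr ⟨W₀, ?_, hzW₀⟩
  refine Set.mem_iUnion.mpr ⟨Encodable.encode ((p.map Prod.snd, i, j) : List ℕ × ℕ × ℕ), ?_⟩
  exact ⟨p, y, i, j, U, hvalid m, hB (F m), hUn, rfl, hW₀G⟩

end S15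
namespace S15
set_option linter.unusedSectionVars false

variable {X Y : Type*} [TopologicalSpace X] [TopologicalSpace Y]

theorem valid_prof_finite {Bsel : Node Y → ℕ → Set Y}
    (Hfin : ∀ p i, (Bsel p i).Finite) :
    ∀ ι : List ℕ, {p : Node Y | valid Bsel p ∧ p.map Prod.snd = ι}.Finite := by
  intro ι
  induction ι with
  | nil =>
    refine (Set.finite_singleton ([] : Node Y)).subset ?_
    rintro p ⟨-, hp⟩
    simpa using List.map_eq_nil_iff.mp hp
  | cons i ι' ih =>
    refine ((ih.biUnion (fun p' _ => (Hfin p' i).image (fun y => (y, i) :: p')))).subset ?_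
    rintro p ⟨hv, hp⟩
    match p, hp with
    | (a, b) :: p'', hp =>
      simp only [List.map_cons, List.cons.injEq] at hp
      obtain ⟨rfl, hmap⟩ := hp
      exact Set.mem_biUnion ⟨hv.1, hmap⟩ ⟨a, hv.2, rfl⟩

theorem FF_finite {τ : List (Set (Set X)) → Set (Set X)} (hτ : WinStrat τ)
    {W : ℕ → Set (Set (X × Y))} (hW : ∀ k, W k ∈ OpenCovers (X × Y))
    {Bsel : Node Y → ℕ → Set Y} (Hfin : ∀ p i, (Bsel p i).Finite) (k : ℕ) :
    (FF τ W Bsel k).Finite := by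
  by_cases hk : ∃ q : List ℕ × ℕ × ℕ, Encodable.encode q = k
  · obtain ⟨⟨ι, i, j⟩, hq⟩ := hk
    have : FF τ W Bsel k ⊆
        ⋃ p ∈ {p : Node Y | valid Bsel p ∧ p.map Prod.snd = ι},
          ⋃ y ∈ Bsel p i, ⋃ U ∈ resp τ W p y i j,
            witG W (insert y (aims p)) k U := by
      rintro Wp ⟨p, y, i', j', U, hv, hyB, hU, hk', hWp⟩
      have htr : (p.map Prod.snd, i', j') = ((ι, i, j) : List ℕ × ℕ × ℕ) :=
        Encodable.encode_injective (hq ▸ hk')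
      obtain ⟨h1, h2, h3⟩ : p.map Prod.snd = ι ∧ i' = i ∧ j' = j := by
        refine ⟨congrArg Prod.fst htr, ?_, ?_⟩
        · exact congrArg (Prod.fst ∘ Prod.snd) htr
        · exact congrArg (Prod.snd ∘ Prod.snd) htr
      subst h2; subst h3
      refine Set.mem_biUnion ⟨hv, h1⟩ (Set.mem_biUnion hyB (Set.mem_biUnion hU ?_))
      rwa [hk'] at hWp
    refine Set.Finite.subset ?_ this
    refine (valid_prof_finite Hfin ι).biUnion (fun p _ => ?_)
    refine (Hfin p i).biUnion (fun y _ => ?_)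
    exact (resp_finite hτ hW p y i j).biUnion (fun U _ => witG_finite _ _ _ _)
  · have : FF τ W Bsel k = ∅ := by
      ext Wp
      simp only [Set.mem_empty_iff_false, iff_false]
      rintro ⟨p, y, i', j', U, -, -, -, hk', -⟩
      exact hk ⟨_, hk'⟩
    rw [this]; exact Set.finite_empty

theorem valid_countable {Bsel : Node Y → ℕ → Set Y}
    (Hcnt : ∀ p i, (Bsel p i).Countable) :
    {p : Node Y | valid Bsel p}.Countable := by
  have hlev : ∀ m : ℕ, {p : Node Y | valid Bsel p ∧ p.length = m}.Countable := by
    intro m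
    induction m with
    | zero =>
      refine (Set.countable_singleton ([] : Node Y)).mono ?_
      rintro p ⟨-, hp⟩
      simpa using List.length_eq_zero_iff.mp hp
    | succ m ih =>
      refine Set.Countable.mono ?_
          (ih.biUnion (fun p' _ => Set.countable_iUnion
            (fun i : ℕ => (Hcnt p' i).image (fun y => (y, i) :: p'))))
      rintro p ⟨hv, hp⟩
      match p with
      | (a, b) :: p'' =>
        simp only [List.length_cons, Nat.succ.injEq] at hp
        refine Set.mem_biUnion ⟨hv.1, hp⟩ ?_
        exact Set.mem_iUnion.mpr ⟨b, ⟨a, hv.2, rfl⟩⟩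
  have : {p : Node Y | valid Bsel p} = ⋃ m : ℕ, {p : Node Y | valid Bsel p ∧ p.length = m} := by
    ext p; simp only [Set.mem_setOf_eq, Set.mem_iUnion]
    exact ⟨fun h => ⟨p.length, h, rfl⟩, fun ⟨m, h, _⟩ => h⟩
  rw [this]
  exact Set.countable_iUnion hlev

theorem FF_union_countable {τ : List (Set (Set X)) → Set (Set X)} (hτ : WinStrat τ)
    {W : ℕ → Set (Set (X × Y))} (hW : ∀ k, W k ∈ OpenCovers (X × Y))
    {Bsel : Node Y → ℕ → Set Y} (Hcnt : ∀ p i, (Bsel p i).Countable) :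
    (⋃ k, FF τ W Bsel k).Countable := by
  have hsub : (⋃ k, FF τ W Bsel k) ⊆
      ⋃ p ∈ {p : Node Y | valid Bsel p}, ⋃ i : ℕ, ⋃ y ∈ Bsel p i, ⋃ j : ℕ,
        ⋃ U ∈ resp τ W p y i j,
          witG W (insert y (aims p))
            (Encodable.encode ((p.map Prod.snd, i, j) : List ℕ × ℕ × ℕ)) U := by
    rintro Wp hWp
    obtain ⟨k, hk⟩ := Set.mem_iUnion.mp hWp
    obtain ⟨p, y, i, j, U, hv, hyB, hU, -, hWp'⟩ := hk
    refine Set.mem_biUnion hv ?_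
    refine Set.mem_iUnion.mpr ⟨i, Set.mem_biUnion hyB ?_⟩
    exact Set.mem_iUnion.mpr ⟨j, Set.mem_biUnion hU hWp'⟩
  refine Set.Countable.mono hsub ?_
  refine (valid_countable Hcnt).biUnion (fun p _ => ?_)
  refine Set.countable_iUnion (fun i => ?_)
  refine (Hcnt p i).biUnion (fun y _ => ?_)
  refine Set.countable_iUnion (fun j => ?_)
  exact (resp_finite hτ hW p y i j).countable.biUnion
    (fun U _ => (witG_finite _ _ _ _).countable)

end S15
namespace S15
set_option linter.unusedSectionVars false

variable {X Y : Type*} [TopologicalSpace X] [TopologicalSpace Y]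

theorem lind_selector {τ : List (Set (Set X)) → Set (Set X)} (hτ : WinStrat τ)
    {W : ℕ → Set (Set (X × Y))} (hW : ∀ k, W k ∈ OpenCovers (X × Y))
    (hY : LindelofFam (OpenCovers Y) (OpenCovers Y)) :
    ∃ Bsel : Node Y → ℕ → Set Y, (∀ p i, (Bsel p i).Countable) ∧
      ∀ p y', ∃ i y, 0 < i ∧ y ∈ Bsel p i ∧ y' ∈ Nset τ W p i y := by
  have key : ∀ p : Node Y, ∃ B : ℕ → Set Y, (∀ i, (B i).Countable) ∧
      ∀ y', ∃ i y, 0 < i ∧ y ∈ B i ∧ y' ∈ Nset τ W p i y := by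
    intro p
    obtain ⟨C, hCsub, hCcnt, hCmem⟩ := hY (Fam τ W p 1) (Fam_mem_openCovers hτ hW p 1)
    have hex : ∀ V ∈ C, ∃ y, V = Nset τ W p 1 y := fun V hV => hCsub hV
    choose g hg using hex
    refine ⟨fun i => if i = 1 then {y | ∃ V, ∃ h : V ∈ C, y = g V h} else ∅, ?_, ?_⟩
    · intro i
      simp only
      split
      · have := hCcnt.to_subtype
        have : {y | ∃ V, ∃ h : V ∈ C, y = g V h} =
            Set.range (fun v : C => g v.1 v.2) := by
          ext y; constructor
          · rintro ⟨V, hV, rfl⟩; exact ⟨⟨V, hV⟩, rfl⟩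
          · rintro ⟨⟨V, hV⟩, rfl⟩; exact ⟨V, hV, rfl⟩
        rw [this]
        exact Set.countable_range _
      · exact Set.countable_empty
    · intro y'
      have hy' : y' ∈ ⋃₀ C := by rw [hCmem.2]; trivial
      obtain ⟨V, hVC, hy'V⟩ := hy'
      refine ⟨1, g V hVC, Nat.one_pos, by simp only [if_pos rfl]; exact ⟨V, hVC, rfl⟩, ?_⟩
      rw [← hg V hVC]; exact hy'V
  choose Bsel h1 h2 using key
  exact ⟨Bsel, h1, h2⟩

theorem meng_selector {τ : List (Set (Set X)) → Set (Set X)} (hτ : WinStrat τ)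
    {W : ℕ → Set (Set (X × Y))} (hW : ∀ k, W k ∈ OpenCovers (X × Y))
    (hY : SelSfin (OpenCovers Y) (OpenCovers Y)) :
    ∃ Bsel : Node Y → ℕ → Set Y, (∀ p i, (Bsel p i).Finite) ∧
      ∀ p y', ∃ i y, 0 < i ∧ y ∈ Bsel p i ∧ y' ∈ Nset τ W p i y := by
  have key : ∀ p : Node Y, ∃ B : ℕ → Set Y, (∀ i, (B i).Finite) ∧
      ∀ y', ∃ i y, 0 < i ∧ y ∈ B i ∧ y' ∈ Nset τ W p i y := by
    intro p
    obtain ⟨Fp, hFp, hFcov⟩ := hY (fun n => Fam τ W p (n + 1))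
      (fun n => Fam_mem_openCovers hτ hW p (n + 1))
    have hex : ∀ n, ∀ V ∈ Fp n, ∃ y, V = Nset τ W p (n + 1) y :=
      fun n V hV => (hFp n).1 hV
    choose g hg using hex
    refine ⟨fun i => Nat.casesOn i ∅ (fun n => {y | ∃ V, ∃ h : V ∈ Fp n, y = g n V h}),
      ?_, ?_⟩
    · intro i
      cases i with
      | zero => exact Set.finite_empty
      | succ n =>
        have := (hFp n).2.dependent_image (fun V (h : V ∈ Fp n) => g n V h)
        refine this.subset ?_
        rintro y ⟨V, hV, rfl⟩
        exact ⟨V, hV, rfl⟩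
    · intro y'
      have hy' : y' ∈ ⋃₀ ⋃ n, Fp n := by rw [hFcov.2]; trivial
      obtain ⟨V, hVmem, hy'V⟩ := hy'
      obtain ⟨n, hVn⟩ := Set.mem_iUnion.mp hVmem
      refine ⟨n + 1, g n V hVn, Nat.succ_pos n, ⟨V, hVn, rfl⟩, ?_⟩
      rw [← hg n V hVn]; exact hy'V
  choose Bsel h1 h2 using key
  exact ⟨Bsel, h1, h2⟩

end S15
/-- If TWO has a winning strategy in the Menger game on `X`, then `X`
is both productively Lindelöf and productively Menger. -/
theorem statement15 {X : Type*} [TopologicalSpace X]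
    (h : TwoWinsGfin (OpenCovers X) (OpenCovers X))
    (Y : Type*) [TopologicalSpace Y] :
    (LindelofFam (OpenCovers Y) (OpenCovers Y) →
      LindelofFam (OpenCovers (X × Y)) (OpenCovers (X × Y))) ∧
    (SelSfin (OpenCovers Y) (OpenCovers Y) →
      SelSfin (OpenCovers (X × Y)) (OpenCovers (X × Y))) := by
  obtain ⟨τ, hτ⟩ := h
  have hτ' : S15.WinStrat τ := hτ
  constructor
  · -- productively Lindelöf
    intro hY 𝒮 h𝒮
    have hW : ∀ k : ℕ, (fun _ : ℕ => 𝒮) k ∈ OpenCovers (X × Y) := fun _ => h𝒮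
    obtain ⟨Bsel, hcnt, hcov⟩ := S15.lind_selector hτ' hW hY
    have hsub : (⋃ k, S15.FF τ (fun _ : ℕ => 𝒮) Bsel k) ⊆ 𝒮 :=
      Set.iUnion_subset (fun k => S15.FF_sub hτ' hW Bsel k)
    refine ⟨⋃ k, S15.FF τ (fun _ : ℕ => 𝒮) Bsel k, hsub,
      S15.FF_union_countable hτ' hW hcnt, ?_, ?_⟩
    · intro U hU
      exact h𝒮.1 U (hsub hU)
    · exact S15.FF_covers hτ' hW hcov
  · -- productively Menger
    intro hY 𝒜 h𝒜
    obtain ⟨Bsel, hfin, hcov⟩ := S15.meng_selector hτ' h𝒜 hY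
    refine ⟨fun k => S15.FF τ 𝒜 Bsel k,
      fun k => ⟨S15.FF_sub hτ' h𝒜 Bsel k, S15.FF_finite hτ' h𝒜 hfin k⟩, ?_, ?_⟩
    · intro U hU
      obtain ⟨k, hk⟩ := Set.mem_iUnion.mp hU
      exact (h𝒜 k).1 U (S15.FF_sub hτ' h𝒜 Bsel k hk)
    · exact S15.FF_covers hτ' h𝒜 hcov
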